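/- arXiv:2507.01655 — 3 statements merged into one kernel-verified Lean document; each statement's English description precedes it below -/
import Mathlib

section
/- On the Lie algebra n_t (for every real t ≠ 0), the torsion 3-form T = −2t(e₁₂₆ − e₃₄₆) is parallel with respect to its torsion connection ∇: (∇_X T)(Y,Z,V) = 0 for all X,Y,Z,V. -/
open scoped BigOperators

noncomputable section

/-- The standard inner product on ℝ⁶. -/
def gIP (X Y : Fin 6 → ℝ) : ℝ := ∑ i, X i * Y i

/-- The standard orthonormal basis e₁,…,e₆ (0-indexed). -/
def e (i : Fin 6) : Fin 6 → ℝ := fun j => if j = i then 1 else 0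

/-- The 2-form e_{ij} (0-indexed). -/
def two (i j : Fin 6) (X Y : Fin 6 → ℝ) : ℝ := X i * Y j - X j * Y i

/-- The 3-form e_{ijk} (0-indexed). -/
def three (i j k : Fin 6) (X Y Z : Fin 6 → ℝ) : ℝ :=
  X i * (Y j * Z k - Y k * Z j) - X j * (Y i * Z k - Y k * Z i) + X k * (Y i * Z j - Y j * Z i)

/-- The 4-form e_{ijkl} (0-indexed). -/
def four (i j k l : Fin 6) (X Y Z W : Fin 6 → ℝ) : ℝ :=
  X i * three j k l Y Z W - X j * three i k l Y Z W
    + X k * three i j l Y Z W - X l * three i j k Y Z W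

/-- F = −e₁₂ − e₃₄ − e₅₆. -/
def Fform (X Y : Fin 6 → ℝ) : ℝ := -two 0 1 X Y - two 2 3 X Y - two 4 5 X Y

/-- Ψ⁺ = −e₁₃₅ + e₂₃₆ + e₁₄₆ + e₂₄₅. -/
def Psip (X Y Z : Fin 6 → ℝ) : ℝ :=
  -three 0 2 4 X Y Z + three 1 2 5 X Y Z + three 0 3 5 X Y Z + three 1 3 4 X Y Z

/-- Ψ⁻ = −e₁₃₆ − e₁₄₅ − e₂₃₅ + e₂₄₆. -/
def Psim (X Y Z : Fin 6 → ℝ) : ℝ :=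
  -three 0 2 5 X Y Z - three 0 3 4 X Y Z - three 1 2 4 X Y Z + three 1 3 5 X Y Z

/-- Φ(X,Y,Z,V) = F(X,Y)F(Z,V) + F(Y,Z)F(X,V) + F(Z,X)F(Y,V). -/
def Phi (X Y Z V : Fin 6 → ℝ) : ℝ :=
  Fform X Y * Fform Z V + Fform Y Z * Fform X V + Fform Z X * Fform Y V

/-- The orthogonal complex structure: Je₁=e₂, Je₂=−e₁, Je₃=e₄, Je₄=−e₃, Je₅=e₆, Je₆=−e₅. -/
def Jc (X : Fin 6 → ℝ) : Fin 6 → ℝ := ![-X 1, X 0, -X 3, X 2, -X 5, X 4]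

/-- Θ⁺ = e₁₃₅ − e₁₄₆ − e₂₃₆ − e₂₄₅. -/
def Thp (X Y Z : Fin 6 → ℝ) : ℝ :=
  three 0 2 4 X Y Z - three 0 3 5 X Y Z - three 1 2 5 X Y Z - three 1 3 4 X Y Z

/-- Θ⁻ = e₁₃₆ + e₁₄₅ + e₂₃₅ − e₂₄₆. -/
def Thm (X Y Z : Fin 6 → ℝ) : ℝ :=
  three 0 2 5 X Y Z + three 0 3 4 X Y Z + three 1 2 4 X Y Z - three 1 3 5 X Y Z

/-- Nijenhuis tensor N(X,Y) = [JX,JY] − [X,Y] − J[JX,Y] − J[X,JY] for a bracket `br`. -/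
def Nij (br : (Fin 6 → ℝ) → (Fin 6 → ℝ) → (Fin 6 → ℝ)) (X Y : Fin 6 → ℝ) : Fin 6 → ℝ :=
  br (Jc X) (Jc Y) - br X Y - Jc (br (Jc X) Y) - Jc (br X (Jc Y))

/-- Chevalley–Eilenberg differential of a 2-form. -/
def d2 (br : (Fin 6 → ℝ) → (Fin 6 → ℝ) → (Fin 6 → ℝ))
    (α : (Fin 6 → ℝ) → (Fin 6 → ℝ) → ℝ) (X Y Z : Fin 6 → ℝ) : ℝ :=
  -α (br X Y) Z + α (br X Z) Y - α (br Y Z) X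

/-- Chevalley–Eilenberg differential of a 3-form. -/
def d3 (br : (Fin 6 → ℝ) → (Fin 6 → ℝ) → (Fin 6 → ℝ))
    (α : (Fin 6 → ℝ) → (Fin 6 → ℝ) → (Fin 6 → ℝ) → ℝ) (X Y Z W : Fin 6 → ℝ) : ℝ :=
  -α (br X Y) Z W + α (br X Z) Y W - α (br X W) Y Z
    - α (br Y Z) X W + α (br Y W) X Z - α (br Z W) X Y

/-- The torsion connection ∇ associated with a bracket `br` and a 3-form `T`:
g(∇_X Y, Z) = ½( g([X,Y],Z) − g([Y,Z],X) + g([Z,X],Y) + T(X,Y,Z) ). -/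
def nab (br : (Fin 6 → ℝ) → (Fin 6 → ℝ) → (Fin 6 → ℝ))
    (T : (Fin 6 → ℝ) → (Fin 6 → ℝ) → (Fin 6 → ℝ) → ℝ)
    (X Y : Fin 6 → ℝ) : Fin 6 → ℝ :=
  fun m => (1/2) * (gIP (br X Y) (e m) - gIP (br Y (e m)) X + gIP (br (e m) X) Y + T X Y (e m))

/-- The covariant derivative of a 3-form α:
(∇_X α)(Y,Z,V) = −α(∇_X Y,Z,V) − α(Y,∇_X Z,V) − α(Y,Z,∇_X V). -/
def nabForm3 (br : (Fin 6 → ℝ) → (Fin 6 → ℝ) → (Fin 6 → ℝ))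
    (T α : (Fin 6 → ℝ) → (Fin 6 → ℝ) → (Fin 6 → ℝ) → ℝ)
    (X Y Z V : Fin 6 → ℝ) : ℝ :=
  -α (nab br T X Y) Z V - α Y (nab br T X Z) V - α Y Z (nab br T X V)

/-- Curvature R(X,Y)Z = ∇_X∇_Y Z − ∇_Y∇_X Z − ∇_{[X,Y]}Z. -/
def Rmap (br : (Fin 6 → ℝ) → (Fin 6 → ℝ) → (Fin 6 → ℝ))
    (T : (Fin 6 → ℝ) → (Fin 6 → ℝ) → (Fin 6 → ℝ) → ℝ)
    (X Y Z : Fin 6 → ℝ) : Fin 6 → ℝ :=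
  nab br T X (nab br T Y Z) - nab br T Y (nab br T X Z) - nab br T (br X Y) Z

/-- R(X,Y,Z,V) = g(R(X,Y)Z,V). -/
def R4 (br : (Fin 6 → ℝ) → (Fin 6 → ℝ) → (Fin 6 → ℝ))
    (T : (Fin 6 → ℝ) → (Fin 6 → ℝ) → (Fin 6 → ℝ) → ℝ)
    (X Y Z V : Fin 6 → ℝ) : ℝ :=
  gIP (Rmap br T X Y Z) V

/-- The Lie bracket of 𝔫_t: [e₁,e₂] = 2t·e₆, [e₃,e₄] = −2t·e₆ (bilinear extension). -/
def brN (t : ℝ) (X Y : Fin 6 → ℝ) : Fin 6 → ℝ :=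
  (2 * t * two 0 1 X Y - 2 * t * two 2 3 X Y) • e 5

/-- The torsion 3-form T = −2t(e₁₂₆ − e₃₄₆) on 𝔫_t. -/
def TN (t : ℝ) (X Y Z : Fin 6 → ℝ) : ℝ :=
  -2 * t * (three 0 1 5 X Y Z - three 2 3 5 X Y Z)

lemma nab_eq (t : ℝ) (X Y : Fin 6 → ℝ) (m : Fin 6) :
    nab (brN t) (TN t) X Y m =
      2 * t * X 5 * (if m = 0 then Y 1 else if m = 1 then -Y 0 else
        if m = 2 then -Y 3 else if m = 3 then Y 2 else 0) := by
  fin_cases m <;>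
    simp [nab, brN, TN, gIP, three, two, e, Fin.sum_univ_six] <;> ring

/-- on 𝔫_t (t ≠ 0), the torsion T = −2t(e₁₂₆ − e₃₄₆) is ∇-parallel. -/
theorem stmt5 (t : ℝ) (ht : t ≠ 0) :
    ∀ X Y Z V : Fin 6 → ℝ, nabForm3 (brN t) (TN t) (TN t) X Y Z V = 0 := by
  intro X Y Z V
  simp only [nabForm3, TN, three, nab_eq, Fin.reduceEq, reduceIte]
  ring
end
end

section
/- On the Lie algebra s^δ_{r,t} (δ = ±1, r ≠ 0, t ≠ 0 real), let ∇ be the torsion connection associated with the 3-form T = −(2δt/r²)(e₁₂₆ − e₃₄₆). Then: (1) ∇_X(JY) = J(∇_X Y) for all X,Y; (2) ∇Θ⁺ = 0 and ∇Θ⁻ = 0; (3) the torsion of ∇ satisfies g(∇_X Y − ∇_Y X − [X,Y], Z) = T(X,Y,Z) for all X,Y,Z; (4) the Lee form vanishes: θ(X) = −½ Σᵢ T(JX, eᵢ, Jeᵢ) = 0 for all X (balanced). -/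
open scoped BigOperators

noncomputable section

/-- The Lie bracket of s^δ_{r,t}: [e₂,e₅]=(2/t)e₁, [e₁,e₅]=−(2/t)e₂, [e₄,e₅]=−(2/t)e₃,
[e₃,e₅]=(2/t)e₄, [e₁,e₂]=(2δt/r²)e₆, [e₃,e₄]=−(2δt/r²)e₆ (bilinear extension). -/
def brS (δ r t : ℝ) (X Y : Fin 6 → ℝ) : Fin 6 → ℝ :=
  ((2 / t) * two 1 4 X Y) • e 0 + (-(2 / t) * two 0 4 X Y) • e 1
    + (-(2 / t) * two 3 4 X Y) • e 2 + ((2 / t) * two 2 4 X Y) • e 3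
    + ((2 * δ * t / r ^ 2) * two 0 1 X Y - (2 * δ * t / r ^ 2) * two 2 3 X Y) • e 5

/-- The torsion 3-form T = −(2δt/r²)(e₁₂₆ − e₃₄₆) on s^δ_{r,t}. -/
def TS (δ r t : ℝ) (X Y Z : Fin 6 → ℝ) : ℝ :=
  -(2 * δ * t / r ^ 2) * (three 0 1 5 X Y Z - three 2 3 5 X Y Z)



lemma nab0 (δ r t : ℝ) (X Y : Fin 6 → ℝ) :
    nab (brS δ r t) (TS δ r t) X Y 0 = -(2/t)*X 4*Y 1 + (2*δ*t/r^2)*X 5*Y 1 := by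
  simp [nab, brS, TS, gIP, two, three, e, Fin.sum_univ_six]; ring

lemma nab1 (δ r t : ℝ) (X Y : Fin 6 → ℝ) :
    nab (brS δ r t) (TS δ r t) X Y 1 = (2/t)*X 4*Y 0 - (2*δ*t/r^2)*X 5*Y 0 := by
  simp [nab, brS, TS, gIP, two, three, e, Fin.sum_univ_six]; ring

lemma nab2 (δ r t : ℝ) (X Y : Fin 6 → ℝ) :
    nab (brS δ r t) (TS δ r t) X Y 2 = (2/t)*X 4*Y 3 - (2*δ*t/r^2)*X 5*Y 3 := by
  simp [nab, brS, TS, gIP, two, three, e, Fin.sum_univ_six]; ring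

lemma nab3 (δ r t : ℝ) (X Y : Fin 6 → ℝ) :
    nab (brS δ r t) (TS δ r t) X Y 3 = -(2/t)*X 4*Y 2 + (2*δ*t/r^2)*X 5*Y 2 := by
  simp [nab, brS, TS, gIP, two, three, e, Fin.sum_univ_six]; ring

lemma nab4 (δ r t : ℝ) (X Y : Fin 6 → ℝ) :
    nab (brS δ r t) (TS δ r t) X Y 4 = 0 := by
  simp [nab, brS, TS, gIP, two, three, e, Fin.sum_univ_six]; ring

lemma nab5 (δ r t : ℝ) (X Y : Fin 6 → ℝ) :
    nab (brS δ r t) (TS δ r t) X Y 5 = 0 := by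
  simp [nab, brS, TS, gIP, two, three, e, Fin.sum_univ_six]; ring

lemma vec6_four (a b c d f g : ℝ) : ![a,b,c,d,f,g] (4 : Fin 6) = f := rfl
lemma vec6_five (a b c d f g : ℝ) : ![a,b,c,d,f,g] (5 : Fin 6) = g := rfl

set_option maxHeartbeats 1000000 in
/-- on s^δ_{r,t}, the torsion connection ∇ of T = −(2δt/r²)(e₁₂₆ − e₃₄₆) satisfies
∇J = 0, ∇Θ⁺ = ∇Θ⁻ = 0, has torsion T, and the Lee form vanishes. -/
theorem stmt8 (δ r t : ℝ) (hδ : δ = 1 ∨ δ = -1) (hr : r ≠ 0) (ht : t ≠ 0) :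
    (∀ X Y : Fin 6 → ℝ,
      nab (brS δ r t) (TS δ r t) X (Jc Y) = Jc (nab (brS δ r t) (TS δ r t) X Y)) ∧
    (∀ X Y Z V : Fin 6 → ℝ, nabForm3 (brS δ r t) (TS δ r t) Thp X Y Z V = 0) ∧
    (∀ X Y Z V : Fin 6 → ℝ, nabForm3 (brS δ r t) (TS δ r t) Thm X Y Z V = 0) ∧
    (∀ X Y Z : Fin 6 → ℝ,
      gIP (nab (brS δ r t) (TS δ r t) X Y - nab (brS δ r t) (TS δ r t) Y X - brS δ r t X Y) Z
        = TS δ r t X Y Z) ∧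
    (∀ X : Fin 6 → ℝ, -(1/2) * ∑ i, TS δ r t (Jc X) (e i) (Jc (e i)) = 0) := by
  refine ⟨?_, ?_, ?_, ?_, ?_⟩
  · intro X Y
    funext m
    fin_cases m <;>
      simp [nab, brS, TS, gIP, two, three, e, Jc, Fin.sum_univ_six, vec6_four, vec6_five] <;>
      ring
  · intro X Y Z V
    simp only [nabForm3, Thp, three, nab0, nab1, nab2, nab3, nab4, nab5]
    ring
  · intro X Y Z V
    simp only [nabForm3, Thm, three, nab0, nab1, nab2, nab3, nab4, nab5]
    ring
  · intro X Y Z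
    simp [gIP, nab, brS, TS, two, three, e, Fin.sum_univ_six]
    ring
  · intro X
    simp [TS, three, Jc, e, Fin.sum_univ_six, vec6_four, vec6_five]
end
end

section
/- On the nilpotent Lie algebra 𝔫, let ∇ be the torsion connection associated with the 3-form T = −2e₁₄₅ + e₁₃₆ + e₂₃₅ − e₂₄₆. Then: (1) ∇_X(JY) = J(∇_X Y) for all X,Y; (2) ∇Ψ⁺ = 0 and ∇Ψ⁻ = 0; (3) the torsion of ∇ satisfies g(∇_X Y − ∇_Y X − [X,Y], Z) = T(X,Y,Z) for all X,Y,Z; (4) the Lee form vanishes: θ(X) = −½ Σᵢ T(JX, eᵢ, Jeᵢ) = 0 for all X (balanced); (5) the Chevalley–Eilenberg differential of T is dT = −2(e₁₂₃₄ + e₁₂₅₆ + e₃₄₅₆). -/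
open scoped BigOperators

noncomputable section

/-- The Lie bracket of the nilpotent Lie algebra 𝔫: [e₃,e₆]=−e₁, [e₂,e₆]=−e₄, [e₂,e₃]=−e₅
(bilinear extension). -/
def brNil (X Y : Fin 6 → ℝ) : Fin 6 → ℝ :=
  (-two 2 5 X Y) • e 0 + (-two 1 5 X Y) • e 3 + (-two 1 2 X Y) • e 4

/-- The torsion 3-form T = −2e₁₄₅ + e₁₃₆ + e₂₃₅ − e₂₄₆ on 𝔫. -/
def TNil (X Y Z : Fin 6 → ℝ) : ℝ :=
  -2 * three 0 3 4 X Y Z + three 0 2 5 X Y Z + three 1 2 4 X Y Z - three 1 3 5 X Y Z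

lemma jc0 (X : Fin 6 → ℝ) : Jc X 0 = -X 1 := rfl
lemma jc1 (X : Fin 6 → ℝ) : Jc X 1 = X 0 := rfl
lemma jc2 (X : Fin 6 → ℝ) : Jc X 2 = -X 3 := rfl
lemma jc3 (X : Fin 6 → ℝ) : Jc X 3 = X 2 := rfl
lemma jc4 (X : Fin 6 → ℝ) : Jc X 4 = -X 5 := rfl
lemma jc5 (X : Fin 6 → ℝ) : Jc X 5 = X 4 := rfl

lemma br0 (X Y : Fin 6 → ℝ) : brNil X Y 0 = -(X 2 * Y 5 - X 5 * Y 2) := by simp [brNil, e, two]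
lemma br1 (X Y : Fin 6 → ℝ) : brNil X Y 1 = 0 := by simp [brNil, e, two]
lemma br2 (X Y : Fin 6 → ℝ) : brNil X Y 2 = 0 := by simp [brNil, e, two]
lemma br3 (X Y : Fin 6 → ℝ) : brNil X Y 3 = -(X 1 * Y 5 - X 5 * Y 1) := by simp [brNil, e, two]
lemma br4 (X Y : Fin 6 → ℝ) : brNil X Y 4 = -(X 1 * Y 2 - X 2 * Y 1) := by simp [brNil, e, two]
lemma br5 (X Y : Fin 6 → ℝ) : brNil X Y 5 = 0 := by simp [brNil, e, two]

lemma nab0_s16 (X Y : Fin 6 → ℝ) : nab brNil TNil X Y 0 = -X 3 * Y 4 + X 4 * Y 3 := by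
  simp only [nab, gIP, Fin.sum_univ_six, TNil, three, br0, br1, br2, br3, br4, br5, e,
    Fin.reduceEq, reduceIte, if_true, if_false]
  ring
lemma nab1_s16 (X Y : Fin 6 → ℝ) : nab brNil TNil X Y 1 = -X 3 * Y 5 - X 4 * Y 2 := by
  simp only [nab, gIP, Fin.sum_univ_six, TNil, three, br0, br1, br2, br3, br4, br5, e,
    Fin.reduceEq, reduceIte, if_true, if_false]
  ring
lemma nab2_s16 (X Y : Fin 6 → ℝ) : nab brNil TNil X Y 2 = -X 0 * Y 5 + X 4 * Y 1 := by
  simp only [nab, gIP, Fin.sum_univ_six, TNil, three, br0, br1, br2, br3, br4, br5, e,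
    Fin.reduceEq, reduceIte, if_true, if_false]
  ring
lemma nab3_s16 (X Y : Fin 6 → ℝ) : nab brNil TNil X Y 3 = X 0 * Y 4 - X 4 * Y 0 := by
  simp only [nab, gIP, Fin.sum_univ_six, TNil, three, br0, br1, br2, br3, br4, br5, e,
    Fin.reduceEq, reduceIte, if_true, if_false]
  ring
lemma nab4_s16 (X Y : Fin 6 → ℝ) : nab brNil TNil X Y 4 = -X 0 * Y 3 + X 3 * Y 0 := by
  simp only [nab, gIP, Fin.sum_univ_six, TNil, three, br0, br1, br2, br3, br4, br5, e,
    Fin.reduceEq, reduceIte, if_true, if_false]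
  ring
lemma nab5_s16 (X Y : Fin 6 → ℝ) : nab brNil TNil X Y 5 = X 0 * Y 2 + X 3 * Y 1 := by
  simp only [nab, gIP, Fin.sum_univ_six, TNil, three, br0, br1, br2, br3, br4, br5, e,
    Fin.reduceEq, reduceIte, if_true, if_false]
  ring
/-- on 𝔫, the torsion connection ∇ of T = −2e₁₄₅ + e₁₃₆ + e₂₃₅ − e₂₄₆ satisfies
∇J = 0, ∇Ψ⁺ = ∇Ψ⁻ = 0, has torsion T, the Lee form vanishes, and
dT = −2(e₁₂₃₄ + e₁₂₅₆ + e₃₄₅₆). -/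
theorem stmt16 :
    (∀ X Y : Fin 6 → ℝ, nab brNil TNil X (Jc Y) = Jc (nab brNil TNil X Y)) ∧
    (∀ X Y Z V : Fin 6 → ℝ, nabForm3 brNil TNil Psip X Y Z V = 0) ∧
    (∀ X Y Z V : Fin 6 → ℝ, nabForm3 brNil TNil Psim X Y Z V = 0) ∧
    (∀ X Y Z : Fin 6 → ℝ,
      gIP (nab brNil TNil X Y - nab brNil TNil Y X - brNil X Y) Z = TNil X Y Z) ∧
    (∀ X : Fin 6 → ℝ, -(1/2) * ∑ i, TNil (Jc X) (e i) (Jc (e i)) = 0) ∧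
    (∀ X Y Z W : Fin 6 → ℝ, d3 brNil TNil X Y Z W
      = -2 * (four 0 1 2 3 X Y Z W + four 0 1 4 5 X Y Z W + four 2 3 4 5 X Y Z W)) := by
  refine ⟨?_, ?_, ?_, ?_, ?_, ?_⟩
  · intro X Y
    funext m
    fin_cases m <;>
      · simp only [Fin.zero_eta, Fin.mk_one, Fin.reduceFinMk, Fin.isValue, nab0_s16, nab1_s16, nab2_s16, nab3_s16, nab4_s16, nab5_s16, jc0, jc1, jc2, jc3, jc4, jc5]
        ring
  · intro X Y Z V
    simp only [nabForm3, Psip, three, nab0_s16, nab1_s16, nab2_s16, nab3_s16, nab4_s16, nab5_s16]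
    ring
  · intro X Y Z V
    simp only [nabForm3, Psim, three, nab0_s16, nab1_s16, nab2_s16, nab3_s16, nab4_s16, nab5_s16]
    ring
  · intro X Y Z
    simp only [gIP, Fin.sum_univ_six, Pi.sub_apply, nab0_s16, nab1_s16, nab2_s16, nab3_s16, nab4_s16, nab5_s16,
      br0, br1, br2, br3, br4, br5, TNil, three]
    ring
  · intro X
    simp only [Fin.sum_univ_six, TNil, three, jc0, jc1, jc2, jc3, jc4, jc5, e,
      Fin.reduceEq, reduceIte, if_true, if_false]
    ring
  · intro X Y Z W
    simp only [d3, TNil, three, four, br0, br1, br2, br3, br4, br5]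
    ring
end
end
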